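/- The value −9/8 is the greatest element of the set of all real numbers m such that m = infimum over real θ of cos(a₁θ) + cos(a₂θ) for some positive integers a₁ < a₂. Equivalently: for all positive integers a₁ < a₂, the infimum over θ ∈ ℝ of cos(a₁θ) + cos(a₂θ) is at most −9/8, and this infimum equals −9/8 when (a₁, a₂) = (1, 2). (This says λ(2) = 9/8, where λ(n) = −sup over sets of n distinct positive integers of the minimum of the corresponding cosine polynomial.) -/

import Mathlib

set_option maxHeartbeats 1000000

open Real

private lemma cos_odd_nat_mul_pi {j : ℕ} (hj : Odd j) : Real.cos (j * π) = -1 := by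
  have h := Real.cos_add_nat_mul_pi 0 j
  rwa [zero_add, Real.cos_zero, mul_one, Odd.neg_one_pow hj] at h

/-- If `m*j ≡ n-1 [MOD 2n]` with `j` odd and `n ≥ 3`, then at `θ = jπ/n` the
cosine sum is at most `-3/2`. -/
private lemma key_construction {m n j : ℕ} (hn : 3 ≤ n) (hj : Odd j)
    (hmod : (m * j) % (2 * n) = n - 1) :
    Real.cos (m * (j * π / n)) + Real.cos (n * (j * π / n)) ≤ -3/2 := by
  have hn0 : (n : ℝ) ≠ 0 := by positivity
  have h2 : Real.cos (n * (j * π / n)) = -1 := by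
    have : (n : ℝ) * (j * π / n) = j * π := by field_simp
    rw [this, cos_odd_nat_mul_pi hj]
  have hq : m * j = 2 * n * (m * j / (2 * n)) + (n - 1) := by
    conv_lhs => rw [← Nat.div_add_mod (m * j) (2 * n)]
    rw [hmod]
  set q := m * j / (2 * n) with hqdef
  have h1 : Real.cos (m * (j * π / n)) = -Real.cos (π / n) := by
    have hcast : (m : ℝ) * (j * π / n) = (π - π / n) + q * (2 * π) := by
      have : ((m * j : ℕ) : ℝ) = 2 * n * q + (n - 1) := by
        rw [hq]; push_cast [Nat.cast_sub (by omega : 1 ≤ n)]; ring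
      push_cast at this ⊢
      field_simp
      nlinarith [this, Real.pi_pos]
    rw [hcast, Real.cos_add_nat_mul_two_pi, Real.cos_pi_sub]
  have hcos : Real.cos (π / 3) ≤ Real.cos (π / n) := by
    apply Real.cos_le_cos_of_nonneg_of_le_pi
    · positivity
    · have := Real.pi_pos; nlinarith
    · have h3 : (3:ℝ) ≤ n := by exact_mod_cast hn
      have := Real.pi_pos
      rw [div_le_div_iff₀ (by positivity) (by norm_num)]
      nlinarith
  rw [Real.cos_pi_div_three] at hcos
  rw [h1, h2]
  linarith

/-- Solving the congruence: for `e` even, `o ≥ 3` odd, coprime, there is an odd `j`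
with `e*j ≡ o-1 [MOD 2o]`. -/
private lemma exists_odd_solution {e o : ℕ} (ho3 : 3 ≤ o) (ho : Odd o) (he : Even e)
    (hco : Nat.Coprime e o) : ∃ j : ℕ, Odd j ∧ (e * j) % (2 * o) = o - 1 := by
  haveI : NeZero o := ⟨by omega⟩
  set u := ZMod.unitOfCoprime e hco with hu
  set j₀ : ℕ := ((↑u⁻¹ : ZMod o) * (-1)).val with hj₀
  have hmod0 : e * j₀ ≡ o - 1 [MOD o] := by
    rw [← ZMod.natCast_eq_natCast_iff]
    have hcast : ((o - 1 : ℕ) : ZMod o) = -1 := by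
      push_cast [Nat.cast_sub (by omega : 1 ≤ o)]
      simp
    rw [hcast]
    have hjcast : ((j₀ : ℕ) : ZMod o) = (↑u⁻¹ : ZMod o) * (-1) := by
      rw [hj₀, ZMod.natCast_val, ZMod.cast_id]
    have hecast : ((e : ℕ) : ZMod o) = (u : ZMod o) := (ZMod.coe_unitOfCoprime e hco).symm
    calc ((e * j₀ : ℕ) : ZMod o) = (e : ZMod o) * (j₀ : ZMod o) := by push_cast; ring
      _ = (↑u : ZMod o) * ((↑u⁻¹ : ZMod o) * (-1)) := by rw [hjcast, hecast]
      _ = -1 := by rw [← mul_assoc, Units.mul_inv]; ring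
  -- choose j or j + o to be odd
  set j : ℕ := if j₀ % 2 = 1 then j₀ else j₀ + o with hjdef
  have hjodd : Odd j := by
    rcases ho with ⟨t, ht⟩
    rw [hjdef]
    split <;> rename_i hsplit
    · exact Nat.odd_iff.mpr hsplit
    · refine Nat.odd_iff.mpr ?_; omega
  have hmod1 : e * j ≡ o - 1 [MOD o] := by
    rw [hjdef]
    split
    · exact hmod0
    · calc e * (j₀ + o) = e * j₀ + e * o := by ring
        _ ≡ e * j₀ + 0 [MOD o] := Nat.ModEq.add_right_cancel' 0 (by
            simpa using (Nat.ModEq.add_left (e*j₀) ((Nat.modEq_zero_iff_dvd).mpr ⟨e, mul_comm e o⟩)))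
        _ = e * j₀ := by ring
        _ ≡ o - 1 [MOD o] := hmod0
  refine ⟨j, hjodd, ?_⟩
  -- upgrade mod o to mod 2o using parity
  have hdvd : (o : ℤ) ∣ ((o - 1 : ℕ) : ℤ) - ((e * j : ℕ) : ℤ) := hmod1.dvd
  obtain ⟨k, hk⟩ := hdvd
  have hejeven : Even ((e * j : ℕ) : ℤ) := by
    rcases he with ⟨t, ht⟩
    exact ⟨(t * j : ℕ), by push_cast [ht]; ring⟩
  have hkeven : Even k := by
    rcases Int.even_or_odd k with hke | hko
    · exact hke
    · exfalso
      have hoodd : Odd (o : ℤ) := by rcases ho with ⟨t, ht⟩; exact ⟨t, by push_cast [ht]; ring⟩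
      have hok : Odd ((o:ℤ) * k) := hoodd.mul hko
      rw [← hk] at hok
      rcases hok with ⟨s, hs⟩
      rcases hejeven with ⟨r, hr⟩
      obtain ⟨t, ht⟩ := id ho
      omega
  rcases hkeven with ⟨k', hk'⟩
  have hdvd2 : ((2 * o : ℕ) : ℤ) ∣ ((o - 1 : ℕ) : ℤ) - ((e * j : ℕ) : ℤ) := by
    refine ⟨k', ?_⟩
    rw [hk, hk']
    push_cast
    ring
  have := (Nat.modEq_iff_dvd (n := 2 * o)).mpr hdvd2
  rw [Nat.ModEq] at this
  rw [this, Nat.mod_eq_of_lt (by omega)]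

private lemma one_two_val :
    Real.cos ((1:ℕ) * Real.arccos (-(1/4))) + Real.cos ((2:ℕ) * Real.arccos (-(1/4))) = -9/8 := by
  have hc : Real.cos (Real.arccos (-(1/4))) = -(1/4) :=
    Real.cos_arccos (by norm_num) (by norm_num)
  have h1 : ((1:ℕ):ℝ) * Real.arccos (-(1/4)) = Real.arccos (-(1/4)) := by push_cast; ring
  have h2 : ((2:ℕ):ℝ) * Real.arccos (-(1/4)) = 2 * Real.arccos (-(1/4)) := by push_cast; ring
  rw [h1, h2, Real.cos_two_mul, hc]
  norm_num

private lemma coprime_case {a b : ℕ} (ha : 0 < a) (hab : a < b) (hco : Nat.Coprime a b) :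
    ∃ θ : ℝ, Real.cos (a * θ) + Real.cos (b * θ) ≤ -9/8 := by
  rcases Nat.even_or_odd a with hae | hao
  · -- a even, so b odd
    have hbo : Odd b := by
      rcases Nat.even_or_odd b with hbe | hbo
      · exfalso
        rcases hae with ⟨s, hs⟩; rcases hbe with ⟨t, ht⟩
        have : 2 ∣ Nat.gcd a b := Nat.dvd_gcd ⟨s, by omega⟩ ⟨t, by omega⟩
        rw [hco] at this; omega
      · exact hbo
    have hb3 : 3 ≤ b := by
      rcases hae with ⟨s, hs⟩; rcases hbo with ⟨t, ht⟩; omega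
    obtain ⟨j, hjodd, hjmod⟩ := exists_odd_solution hb3 hbo hae hco
    exact ⟨j * π / b, le_trans (key_construction hb3 hjodd hjmod) (by norm_num)⟩
  · rcases Nat.even_or_odd b with hbe | hbo
    · -- a odd, b even
      rcases Nat.lt_or_ge a 3 with ha3 | ha3
      · -- a = 1
        have ha1 : a = 1 := by rcases hao with ⟨t, ht⟩; omega
        rcases Nat.lt_or_ge b 3 with hb3 | hb3
        · -- b = 2
          have hb2 : b = 2 := by rcases hbe with ⟨t, ht⟩; omega
          subst ha1 hb2
          exact ⟨Real.arccos (-(1/4)), le_of_eq one_two_val⟩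
        · -- b ≥ 4 even, a = 1 : take j = b - 1
          subst ha1
          have hjodd : Odd (b - 1) := by rcases hbe with ⟨t, ht⟩; refine Nat.odd_iff.mpr ?_; omega
          have hjmod : (1 * (b - 1)) % (2 * b) = b - 1 := by
            rw [one_mul]; exact Nat.mod_eq_of_lt (by omega)
          exact ⟨((b - 1 : ℕ) : ℝ) * π / b,
            le_trans (key_construction hb3 hjodd hjmod) (by norm_num)⟩
      · -- a ≥ 3 odd, b even
        obtain ⟨j, hjodd, hjmod⟩ := exists_odd_solution ha3 hao hbe hco.symm
        refine ⟨j * π / a, ?_⟩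
        have := key_construction ha3 hjodd hjmod
        linarith
    · -- both odd : θ = π
      refine ⟨π, ?_⟩
      have h1 : Real.cos (a * π) = -1 := cos_odd_nat_mul_pi hao
      have h2 : Real.cos (b * π) = -1 := cos_odd_nat_mul_pi hbo
      rw [h1, h2]; norm_num

private lemma main_bound {a b : ℕ} (ha : 0 < a) (hab : a < b) :
    ∃ θ : ℝ, Real.cos (a * θ) + Real.cos (b * θ) ≤ -9/8 := by
  have g0 : 0 < Nat.gcd a b := Nat.gcd_pos_of_pos_left _ ha
  obtain ⟨g, a', b', g0', co, rfl, rfl⟩ := Nat.exists_coprime' g0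
  have ha' : 0 < a' := by
    rcases Nat.eq_zero_or_pos a' with h | h
    · subst h; simp at ha
    · exact h
  have hab' : a' < b' := Nat.lt_of_mul_lt_mul_right hab
  obtain ⟨θ', hθ'⟩ := coprime_case ha' hab' co
  refine ⟨θ' / g, ?_⟩
  have hg0 : (g : ℝ) ≠ 0 := Nat.cast_ne_zero.mpr (by omega)
  have e1 : ((a' * g : ℕ) : ℝ) * (θ' / g) = (a' : ℝ) * θ' := by
    push_cast; field_simp
  have e2 : ((b' * g : ℕ) : ℝ) * (θ' / g) = (b' : ℝ) * θ' := by
    push_cast; field_simp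
  rw [e1, e2]
  exact hθ'

theorem lambda_two :
    IsGreatest {m : ℝ | ∃ a₁ a₂ : ℕ, 0 < a₁ ∧ a₁ < a₂ ∧
      m = ⨅ θ : ℝ, (Real.cos (a₁ * θ) + Real.cos (a₂ * θ))} (-9/8) ∧
    (⨅ θ : ℝ, (Real.cos ((1 : ℕ) * θ) + Real.cos ((2 : ℕ) * θ))) = -9/8 := by
  have hbdd : ∀ a b : ℕ, BddBelow (Set.range fun θ : ℝ => Real.cos (a * θ) + Real.cos (b * θ)) := by
    intro a b
    refine ⟨-2, fun x hx => ?_⟩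
    obtain ⟨θ, rfl⟩ := hx
    have h1 := Real.neg_one_le_cos ((a:ℝ) * θ)
    have h2 := Real.neg_one_le_cos ((b:ℝ) * θ)
    exact le_trans (by norm_num) (add_le_add h1 h2)
  have h2 : (⨅ θ : ℝ, (Real.cos ((1 : ℕ) * θ) + Real.cos ((2 : ℕ) * θ))) = -9/8 := by
    apply le_antisymm
    · exact ciInf_le_of_le (hbdd 1 2) (Real.arccos (-(1/4))) (le_of_eq one_two_val)
    · apply le_ciInf
      intro θ
      have hcos := Real.cos_two_mul θ
      have e1 : ((1:ℕ):ℝ) * θ = θ := by push_cast; ring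
      have e2 : ((2:ℕ):ℝ) * θ = 2 * θ := by push_cast; ring
      rw [e1, e2, hcos]
      nlinarith [sq_nonneg (Real.cos θ + 1/4)]
  refine ⟨⟨⟨1, 2, by norm_num, by norm_num, h2.symm⟩, ?_⟩, h2⟩
  rintro m ⟨a, b, ha, hab, rfl⟩
  obtain ⟨θ₀, hθ₀⟩ := main_bound ha hab
  exact le_trans (ciInf_le (hbdd a b) θ₀) hθ₀
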